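/- arXiv:1102.3673 — 2 statements merged into one kernel-verified Lean document; each statement's English description precedes it below -/
import Mathlib

section
/- In the plane, let ℓ be a line tangent to a circle of center p' and radius R = ‖p' - m'‖ at the point m'. A point q' on the same side of ℓ as p' lies strictly inside the circle if and only if ‖p' - m'‖ > ‖q' - m'‖² / (2 d(q', ℓ)). -/
theorem stmt_11 (p' m' q' : EuclideanSpace ℝ (Fin 2))
    (R : ℝ) (hR : R = ‖p' - m'‖) (hRpos : 0 < R)
    (L : Set (EuclideanSpace ℝ (Fin 2)))
    (hL : L = {x : EuclideanSpace ℝ (Fin 2) | inner ℝ (p' - m') (x - m') = (0 : ℝ)})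
    (hside : (0 : ℝ) < inner ℝ (p' - m') (q' - m'))
    (hq : 0 < Metric.infDist q' L) :
    ‖q' - p'‖ < R ↔ ‖q' - m'‖ ^ 2 / (2 * Metric.infDist q' L) < ‖p' - m'‖ := by
  set n := p' - m' with hn
  set v := q' - m' with hv
  have hnpos : 0 < ‖n‖ := by rw [← hR]; exact hRpos
  set c : ℝ := (inner ℝ n v : ℝ) / ‖n‖ ^ 2 with hc
  have hcpos : 0 < c := div_pos hside (by positivity)
  -- the distance to L
  have hd : Metric.infDist q' L = (inner ℝ n v : ℝ) / ‖n‖ := by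
    apply le_antisymm
    · -- use the projection point
      have hx : q' - c • n ∈ L := by
        rw [hL]
        simp only [Set.mem_setOf_eq]
        have : q' - c • n - m' = v - c • n := by rw [hv]; abel
        rw [this, inner_sub_right, inner_smul_right, real_inner_self_eq_norm_sq]
        rw [hc, div_mul_cancel₀ _ (pow_pos hnpos 2).ne', sub_self]
      calc Metric.infDist q' L ≤ dist q' (q' - c • n) := Metric.infDist_le_dist_of_mem hx
        _ = ‖c • n‖ := by rw [dist_eq_norm]; congr 1; abel
        _ = (inner ℝ n v : ℝ) / ‖n‖ := by
            rw [norm_smul, Real.norm_eq_abs, abs_of_pos hcpos, hc]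
            rw [pow_two]
            field_simp
    · have hne : L.Nonempty := ⟨m', by rw [hL]; simp⟩
      by_contra hlt
      push_neg at hlt
      obtain ⟨y, hy, hdy⟩ := (Metric.infDist_lt_iff hne).1 hlt
      rw [hL] at hy
      have hiy : (inner ℝ n (y - m') : ℝ) = 0 := hy
      have key : (inner ℝ n v : ℝ) = inner ℝ n (q' - y) := by
        have h1 : q' - y = v + -(y - m') := by rw [hv]; abel
        rw [h1, inner_add_right, inner_neg_right, hiy, neg_zero, add_zero]
      rw [dist_eq_norm] at hdy
      have hCS : (inner ℝ n v : ℝ) ≤ ‖n‖ * ‖q' - y‖ := key ▸ real_inner_le_norm n (q' - y)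
      have : ‖q' - y‖ < (inner ℝ n v : ℝ) / ‖n‖ := hdy
      rw [lt_div_iff₀ hnpos] at this
      nlinarith
  rw [hd, hR]
  have hip : 0 < (inner ℝ n v : ℝ) / ‖n‖ := div_pos hside hnpos
  rw [div_lt_iff₀ (by positivity)]
  have hqp : q' - p' = v - n := by rw [hv, hn]; abel
  have hsq : ‖q' - p'‖ ^ 2 = ‖v‖ ^ 2 - 2 * inner ℝ n v + ‖n‖ ^ 2 := by
    rw [hqp, @norm_sub_sq_real, real_inner_comm]
  constructor
  · intro h
    have h2 : ‖q' - p'‖ ^ 2 < ‖n‖ ^ 2 := by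
      apply pow_lt_pow_left₀ h (norm_nonneg _) (by norm_num)
    rw [hsq] at h2
    have : ‖v‖ ^ 2 < 2 * inner ℝ n v := by linarith
    calc ‖v‖ ^ 2 < 2 * inner ℝ n v := this
      _ = ‖n‖ * (2 * ((inner ℝ n v : ℝ) / ‖n‖)) := by field_simp
  · intro h
    have h2 : ‖v‖ ^ 2 < 2 * inner ℝ n v := by
      have := h
      rw [show ‖n‖ * (2 * ((inner ℝ n v : ℝ) / ‖n‖)) = 2 * inner ℝ n v by field_simp] at this
      exact this
    have h3 : ‖q' - p'‖ ^ 2 < ‖n‖ ^ 2 := by rw [hsq]; linarith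
    exact lt_of_pow_lt_pow_left₀ 2 (norm_nonneg n) h3
end

section
/- If all sites in a finite set V ⊆ ℝ² are collinear, then no point of ℝ² is equidistant (in the anisotropic distance D(v,p) = ((p-v)ᵀ Q_p (p-v))^{1/2}) to three distinct sites. -/
open Matrix

noncomputable def aniDist (Q : EuclideanSpace ℝ (Fin 2) → Matrix (Fin 2) (Fin 2) ℝ)
    (v p : EuclideanSpace ℝ (Fin 2)) : ℝ :=
  Real.sqrt ((p - v) ⬝ᵥ (Q p) *ᵥ (p - v))

theorem stmt_12 (V : Finset (EuclideanSpace ℝ (Fin 2)))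
    (hcol : Collinear ℝ (V : Set (EuclideanSpace ℝ (Fin 2))))
    (Q : EuclideanSpace ℝ (Fin 2) → Matrix (Fin 2) (Fin 2) ℝ)
    (hQ : ∀ p, (Q p).PosDef)
    (v₁ v₂ v₃ : EuclideanSpace ℝ (Fin 2)) (h₁ : v₁ ∈ V) (h₂ : v₂ ∈ V) (h₃ : v₃ ∈ V)
    (h12 : v₁ ≠ v₂) (h13 : v₁ ≠ v₃) (h23 : v₂ ≠ v₃) :
    ¬ ∃ p, aniDist Q v₁ p = aniDist Q v₂ p ∧ aniDist Q v₂ p = aniDist Q v₃ p := by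
  rintro ⟨p, hA, hB⟩
  -- set up collinearity through v₁
  have h₁' : v₁ ∈ (V : Set (EuclideanSpace ℝ (Fin 2))) := h₁
  rw [collinear_iff_of_mem h₁'] at hcol
  obtain ⟨d, hd⟩ := hcol
  obtain ⟨t₂, ht₂⟩ := hd v₂ h₂
  obtain ⟨t₃, ht₃⟩ := hd v₃ h₃
  simp only [vadd_eq_add] at ht₂ ht₃
  have ht₁ : v₁ = (0:ℝ) • d + v₁ := by simp
  set t₁ : ℝ := 0 with ht₁def
  set M := Q p with hM
  have hpd := hQ p
  have hnn : ∀ x : EuclideanSpace ℝ (Fin 2), 0 ≤ x ⬝ᵥ M *ᵥ x := by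
    intro x
    have := hpd.posSemidef.dotProduct_mulVec_nonneg (WithLp.ofLp x)
    simpa using this
  -- distances squared equal
  have hA2 : (p - v₁) ⬝ᵥ M *ᵥ (p - v₁) = (p - v₂) ⬝ᵥ M *ᵥ (p - v₂) := by
    have := hA
    unfold aniDist at this
    exact (Real.sqrt_inj (hnn _) (hnn _)).mp this
  have hB2 : (p - v₂) ⬝ᵥ M *ᵥ (p - v₂) = (p - v₃) ⬝ᵥ M *ᵥ (p - v₃) := by
    have := hB
    unfold aniDist at this
    exact (Real.sqrt_inj (hnn _) (hnn _)).mp this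
  set u : EuclideanSpace ℝ (Fin 2) := p - v₁ with hu
  have hsub : ∀ (t : ℝ) (v : EuclideanSpace ℝ (Fin 2)), v = t • d + v₁ → p - v = u - t • d := by
    intro t v hv
    rw [hv, hu]; abel
  have expand : ∀ t : ℝ, (u - t • d) ⬝ᵥ M *ᵥ (u - t • d) =
      (u ⬝ᵥ M *ᵥ u) - t * (u ⬝ᵥ M *ᵥ d + d ⬝ᵥ M *ᵥ u) + t^2 * (d ⬝ᵥ M *ᵥ d) := by
    intro t
    simp only [dotProduct, mulVec, Fin.sum_univ_two, PiLp.smul_apply, PiLp.sub_apply,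
      smul_eq_mul, WithLp.ofLp_sub, WithLp.ofLp_smul, Pi.sub_apply, Pi.smul_apply]
    ring
  have hd0 : d ≠ 0 := by
    rintro rfl
    apply h12
    rw [ht₁, ht₂]; simp
  have hq : 0 < d ⬝ᵥ M *ᵥ d := by
    have := hpd.dotProduct_mulVec_pos (x := WithLp.ofLp d) (by simpa using hd0)
    simpa using this
  set q := d ⬝ᵥ M *ᵥ d
  set B := u ⬝ᵥ M *ᵥ d + d ⬝ᵥ M *ᵥ u
  have e1 := expand t₁
  have e2 := expand t₂
  have e3 := expand t₃
  simp only [← WithLp.ofLp_sub, ← WithLp.ofLp_smul, ← hu] at hA2 hB2 e2 e3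
  rw [hsub t₂ v₂ ht₂, e2] at hA2
  rw [hsub t₂ v₂ ht₂, hsub t₃ v₃ ht₃, e2, e3] at hB2
  have hA2 : u ⬝ᵥ M *ᵥ u - t₁ * B + t₁ ^ 2 * q = u ⬝ᵥ M *ᵥ u - t₂ * B + t₂ ^ 2 * q := by
    rw [ht₁def]; simpa using hA2
  have ht12 : t₁ ≠ t₂ := by rintro rfl; exact h12 (ht₁.trans ht₂.symm)
  have ht23 : t₂ ≠ t₃ := by rintro rfl; exact h23 (ht₂.trans ht₃.symm)
  have ht13 : t₁ ≠ t₃ := by rintro rfl; exact h13 (ht₁.trans ht₃.symm)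
  have k12 : (t₁ + t₂) * q = B := by
    have h : (t₁ - t₂) * ((t₁ + t₂) * q - B) = 0 := by nlinarith [hA2]
    rcases mul_eq_zero.mp h with h' | h'
    · exact absurd (sub_eq_zero.mp h') ht12
    · linarith [sub_eq_zero.mp h']
  have k23 : (t₂ + t₃) * q = B := by
    have h : (t₂ - t₃) * ((t₂ + t₃) * q - B) = 0 := by nlinarith [hB2]
    rcases mul_eq_zero.mp h with h' | h'
    · exact absurd (sub_eq_zero.mp h') ht23
    · linarith [sub_eq_zero.mp h']
  have : t₁ = t₃ := by
    have := k12.trans k23.symm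
    have hq' : q ≠ 0 := ne_of_gt hq
    rw [mul_eq_mul_right_iff] at this
    rcases this with h' | h'
    · linarith
    · exact absurd h' hq'
  exact ht13 this
end
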